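/- Let m ∈ ℝ and σ > 0. Let μ be the Gaussian probability measure on ℝ with mean m and variance σ², and consider the product measure μ ⊗ μ (i.e., X and Y are i.i.d. N(m, σ²)). Define, for r > 0, f_R(r) = (1/(2σ²))·exp(−(2m² + r)/(2σ²))·I₀(m·√(2r)/σ²), and, for x² < r, f(x ∣ r) = exp(x·m/σ²)·cosh(m·√(r − x²)/σ²) / (π·√(r − x²)·I₀(m·√(2r)/σ²)). Then for every bounded measurable function g : ℝ → ℝ and every Borel set A ⊆ (0, ∞), ∫ g(x)·𝟙_A(x² + y²) d(μ ⊗ μ)(x, y) = ∫_{r ∈ A} ( ∫_{x ∈ (−√r, √r)} g(x)·f(x ∣ r) dx )·f_R(r) dr. (That is, f(· ∣ r) is the conditional density of X given X² + Y² = r.) -/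

import Mathlib

open MeasureTheory ProbabilityTheory Real Set

noncomputable def besselI0 (z : ℝ) : ℝ := (1 / π) * ∫ θ in (0:ℝ)..π, Real.exp (z * Real.cos θ)

lemma besselI0_pos (z : ℝ) : 0 < besselI0 z := by
  have h : 0 < ∫ θ in (0:ℝ)..π, Real.exp (z * Real.cos θ) := by
    apply intervalIntegral.intervalIntegral_pos_of_pos_on
    · exact (Real.continuous_exp.comp (continuous_const.mul Real.continuous_cos)).intervalIntegrable _ _
    · intro x _; exact Real.exp_pos _
    · exact Real.pi_pos
  have hπ := Real.pi_pos
  rw [besselI0]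
  positivity

lemma sqrt_image_Ioi (c : ℝ) : (fun r => Real.sqrt (r - c)) '' Ioi c = Ioi (0:ℝ) := by
  ext y
  constructor
  · rintro ⟨r, hr, rfl⟩
    exact Real.sqrt_pos.2 (sub_pos.2 hr)
  · intro hy
    exact ⟨c + y ^ 2, by simp only [Set.mem_Ioi]; nlinarith [mem_Ioi.1 hy], by
      simp [Real.sqrt_sq (le_of_lt hy)]⟩

lemma sqrt_hasDeriv {c r : ℝ} (hr : r ∈ Ioi c) :
    HasDerivWithinAt (fun r => Real.sqrt (r - c)) ((2 * Real.sqrt (r - c))⁻¹) (Ioi c) r := by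
  have h1 : HasDerivAt (fun r : ℝ => r - c) 1 r := (hasDerivAt_id r).sub_const c
  have h2 := (Real.hasDerivAt_sqrt (ne_of_gt (sub_pos.2 hr))).comp r h1
  simpa [one_div, Function.comp_def] using h2.hasDerivWithinAt

lemma sqrt_injOn (c : ℝ) : InjOn (fun r => Real.sqrt (r - c)) (Ioi c) := by
  intro a ha b hb hab
  simp only at hab
  have h1 : Real.sqrt (a - c) ^ 2 = Real.sqrt (b - c) ^ 2 := by rw [hab]
  rw [Real.sq_sqrt (by linarith [mem_Ioi.1 ha]), Real.sq_sqrt (by linarith [mem_Ioi.1 hb])] at h1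
  linarith

lemma cov (c : ℝ) (H : ℝ → ℝ) :
    ∫ y in Ioi (0:ℝ), H y =
      ∫ r in Ioi c, (2 * Real.sqrt (r - c))⁻¹ * H (Real.sqrt (r - c)) := by
  rw [← sqrt_image_Ioi c,
    integral_image_eq_integral_abs_deriv_smul measurableSet_Ioi (fun r hr => sqrt_hasDeriv hr)
      (sqrt_injOn c) H]
  refine setIntegral_congr_fun measurableSet_Ioi fun r hr => ?_
  rw [abs_of_nonneg (by positivity), smul_eq_mul]

lemma cov_integrable (c : ℝ) (H : ℝ → ℝ) :
    IntegrableOn H (Ioi (0:ℝ)) ↔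
      IntegrableOn (fun r => (2 * Real.sqrt (r - c))⁻¹ * H (Real.sqrt (r - c))) (Ioi c) := by
  rw [← sqrt_image_Ioi c,
    integrableOn_image_iff_integrableOn_abs_deriv_smul measurableSet_Ioi
      (fun r hr => sqrt_hasDeriv hr) (sqrt_injOn c) H]
  refine integrableOn_congr_fun (fun r hr => ?_) measurableSet_Ioi
  rw [abs_of_nonneg (show (0:ℝ) ≤ (2 * Real.sqrt (r - c))⁻¹ by positivity), smul_eq_mul]

lemma neg_comp_integrable {h : ℝ → ℝ} (hi : Integrable h (volume : Measure ℝ)) :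
    Integrable (fun y => h (-y)) (volume : Measure ℝ) :=
  ((Measure.measurePreserving_neg (volume : Measure ℝ)).integrable_comp
    hi.aestronglyMeasurable).2 hi

lemma even_split (h : ℝ → ℝ) (hi : Integrable h (volume : Measure ℝ)) :
    ∫ y, h y = ∫ y in Ioi (0:ℝ), (h y + h (-y)) := by
  have h1 : ∫ y, h y = (∫ y in Iic (0:ℝ), h y) + ∫ y in Ioi (0:ℝ), h y := by
    rw [← setIntegral_union (Iic_disjoint_Ioi le_rfl) measurableSet_Ioi hi.integrableOn
      hi.integrableOn, Iic_union_Ioi, setIntegral_univ]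
  have h2 : (∫ y in Iic (0:ℝ), h y) = ∫ y in Ioi (0:ℝ), h (-y) := by
    rw [integral_comp_neg_Ioi, neg_zero]
  rw [h1, h2, ← integral_add ((neg_comp_integrable hi).integrableOn) (hi.integrableOn)]
  congr 1
  funext y
  ring

lemma gaussian_integral_rep (m : ℝ) (v : NNReal) (hv : v ≠ 0) (h : ℝ → ℝ) :
    ∫ y, h y ∂(gaussianReal m v) = ∫ y, gaussianPDFReal m v y * h y := by
  rw [gaussianReal_of_var_ne_zero _ hv]
  have heq : gaussianPDF m v = fun y => ((gaussianPDFReal m v y).toNNReal : ENNReal) := rfl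
  rw [heq, integral_withDensity_eq_integral_smul (measurable_gaussianPDFReal m v).real_toNNReal h]
  congr 1
  funext y
  rw [NNReal.smul_def, smul_eq_mul, Real.coe_toNNReal _ (gaussianPDFReal_nonneg m v y)]

set_option maxHeartbeats 1000000 in
lemma qint (m : ℝ) (v : NNReal) (x : ℝ) :
    IntegrableOn (fun r => (2 * Real.sqrt (r - x ^ 2))⁻¹ *
      (gaussianPDFReal m v (Real.sqrt (r - x ^ 2)) +
        gaussianPDFReal m v (-Real.sqrt (r - x ^ 2)))) (Ioi (x ^ 2)) := by
  have hH : IntegrableOn (fun y => gaussianPDFReal m v y + gaussianPDFReal m v (-y)) (Ioi (0:ℝ)) :=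
    ((integrable_gaussianPDFReal m v).add
      (neg_comp_integrable (integrable_gaussianPDFReal m v))).integrableOn
  exact (cov_integrable (x ^ 2) (fun y => gaussianPDFReal m v y + gaussianPDFReal m v (-y))).1 hH

lemma qtotal (m : ℝ) {v : NNReal} (hv : v ≠ 0) (x : ℝ) :
    (∫ r in Ioi (x ^ 2), (2 * Real.sqrt (r - x ^ 2))⁻¹ *
      (gaussianPDFReal m v (Real.sqrt (r - x ^ 2)) +
        gaussianPDFReal m v (-Real.sqrt (r - x ^ 2)))) = 1 := by
  rw [← cov (x ^ 2) (fun y => gaussianPDFReal m v y + gaussianPDFReal m v (-y)),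
    ← even_split _ (integrable_gaussianPDFReal m v)]
  exact integral_gaussianPDFReal_eq_one m hv

lemma key_identity (m σ x r : ℝ) (hσ : 0 < σ) (hx : x ^ 2 < r) :
    gaussianPDFReal m ⟨σ ^ 2, sq_nonneg σ⟩ x *
      ((2 * Real.sqrt (r - x ^ 2))⁻¹ *
        (gaussianPDFReal m ⟨σ ^ 2, sq_nonneg σ⟩ (Real.sqrt (r - x ^ 2)) +
          gaussianPDFReal m ⟨σ ^ 2, sq_nonneg σ⟩ (-Real.sqrt (r - x ^ 2)))) =
      (Real.exp (x * m / σ ^ 2) * Real.cosh (m * Real.sqrt (r - x ^ 2) / σ ^ 2) /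
          (π * Real.sqrt (r - x ^ 2) * besselI0 (m * Real.sqrt (2 * r) / σ ^ 2))) *
        ((1 / (2 * σ ^ 2)) * Real.exp (-(2 * m ^ 2 + r) / (2 * σ ^ 2)) *
          besselI0 (m * Real.sqrt (2 * r) / σ ^ 2)) := by
  have hπ : 0 < π := Real.pi_pos
  have hw : 0 < r - x ^ 2 := sub_pos.2 hx
  set s := Real.sqrt (r - x ^ 2) with hs
  have hs0 : 0 < s := Real.sqrt_pos.2 hw
  have hs2 : s ^ 2 = r - x ^ 2 := Real.sq_sqrt hw.le
  have hB : 0 < besselI0 (m * Real.sqrt (2 * r) / σ ^ 2) := besselI0_pos _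
  have hsq : Real.sqrt (2 * π * σ ^ 2) * Real.sqrt (2 * π * σ ^ 2) = 2 * π * σ ^ 2 :=
    Real.mul_self_sqrt (by positivity)
  have hcoe : ((⟨σ ^ 2, sq_nonneg σ⟩ : NNReal) : ℝ) = σ ^ 2 := rfl
  have hσ2 : (σ:ℝ) ^ 2 ≠ 0 := by positivity
  simp only [gaussianPDFReal, hcoe]
  rw [Real.cosh_eq]
  have e1 : Real.exp (-(x - m) ^ 2 / (2 * σ ^ 2)) * Real.exp (-(s - m) ^ 2 / (2 * σ ^ 2)) =
      Real.exp (x * m / σ ^ 2) * Real.exp (m * s / σ ^ 2) *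
        Real.exp (-(2 * m ^ 2 + r) / (2 * σ ^ 2)) := by
    rw [← Real.exp_add, ← Real.exp_add, ← Real.exp_add]
    congr 1
    linear_combination (-1 / (2 * σ ^ 2)) * hs2
  have e2 : Real.exp (-(x - m) ^ 2 / (2 * σ ^ 2)) * Real.exp (-(-s - m) ^ 2 / (2 * σ ^ 2)) =
      Real.exp (x * m / σ ^ 2) * Real.exp (-(m * s / σ ^ 2)) *
        Real.exp (-(2 * m ^ 2 + r) / (2 * σ ^ 2)) := by
    rw [← Real.exp_add, ← Real.exp_add, ← Real.exp_add]
    congr 1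
    linear_combination (-1 / (2 * σ ^ 2)) * hs2
  set B := besselI0 (m * Real.sqrt (2 * r) / σ ^ 2) with hBdef
  calc (Real.sqrt (2 * π * σ ^ 2))⁻¹ * Real.exp (-(x - m) ^ 2 / (2 * σ ^ 2)) *
        ((2 * s)⁻¹ *
          ((Real.sqrt (2 * π * σ ^ 2))⁻¹ * Real.exp (-(s - m) ^ 2 / (2 * σ ^ 2)) +
            (Real.sqrt (2 * π * σ ^ 2))⁻¹ * Real.exp (-(-s - m) ^ 2 / (2 * σ ^ 2))))
      = ((Real.sqrt (2 * π * σ ^ 2) * Real.sqrt (2 * π * σ ^ 2))⁻¹) * (2 * s)⁻¹ *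
          (Real.exp (-(x - m) ^ 2 / (2 * σ ^ 2)) * Real.exp (-(s - m) ^ 2 / (2 * σ ^ 2)) +
            Real.exp (-(x - m) ^ 2 / (2 * σ ^ 2)) * Real.exp (-(-s - m) ^ 2 / (2 * σ ^ 2))) := by
        ring
    _ = (2 * π * σ ^ 2)⁻¹ * (2 * s)⁻¹ *
          (Real.exp (x * m / σ ^ 2) * Real.exp (m * s / σ ^ 2) *
              Real.exp (-(2 * m ^ 2 + r) / (2 * σ ^ 2)) +
            Real.exp (x * m / σ ^ 2) * Real.exp (-(m * s / σ ^ 2)) *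
              Real.exp (-(2 * m ^ 2 + r) / (2 * σ ^ 2))) := by
        rw [hsq, e1, e2]
    _ = Real.exp (x * m / σ ^ 2) *
          ((Real.exp (m * s / σ ^ 2) + Real.exp (-(m * s / σ ^ 2))) / 2) /
          (π * s * B) *
        (1 / (2 * σ ^ 2) * Real.exp (-(2 * m ^ 2 + r) / (2 * σ ^ 2)) *
          B) := by
        field_simp [hs0.ne', hB.ne', hπ.ne', hσ2]

theorem conditional_density_rice
    (m σ : ℝ) (hσ : 0 < σ)
    (μ : Measure ℝ) (hμ : μ = gaussianReal m ⟨σ ^ 2, sq_nonneg σ⟩)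
    (fR : ℝ → ℝ)
    (hfR : ∀ r : ℝ, fR r =
      (1 / (2 * σ ^ 2)) * Real.exp (-(2 * m ^ 2 + r) / (2 * σ ^ 2)) *
        besselI0 (m * Real.sqrt (2 * r) / σ ^ 2))
    (f : ℝ → ℝ → ℝ)
    (hf : ∀ x r : ℝ, f x r =
      Real.exp (x * m / σ ^ 2) * Real.cosh (m * Real.sqrt (r - x ^ 2) / σ ^ 2) /
        (π * Real.sqrt (r - x ^ 2) * besselI0 (m * Real.sqrt (2 * r) / σ ^ 2)))
    (g : ℝ → ℝ) (hg : Measurable g) (hgbdd : ∃ C : ℝ, ∀ x, |g x| ≤ C)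
    (A : Set ℝ) (hA : MeasurableSet A) (hAsub : A ⊆ Set.Ioi (0:ℝ)) :
    ∫ p : ℝ × ℝ, g p.1 * Set.indicator A (fun _ => (1:ℝ)) (p.1 ^ 2 + p.2 ^ 2) ∂(μ.prod μ) =
      ∫ r in A, (∫ x in Set.Ioo (-Real.sqrt r) (Real.sqrt r), g x * f x r) * fR r := by
  obtain ⟨C, hC⟩ := hgbdd
  have hC0 : 0 ≤ C := le_trans (abs_nonneg _) (hC 0)
  set v : NNReal := ⟨σ ^ 2, sq_nonneg σ⟩ with hvdef
  have hv : v ≠ 0 := by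
    intro h
    have h2 : ((v : NNReal) : ℝ) = 0 := by rw [h]; rfl
    have h3 : σ ^ 2 = 0 := h2
    nlinarith
  set ρ : ℝ → ℝ := gaussianPDFReal m v with hρdef
  have hρmeas : Measurable ρ := measurable_gaussianPDFReal m v
  have hρ0 : ∀ x, 0 ≤ ρ x := gaussianPDFReal_nonneg m v
  have hρint : Integrable ρ := integrable_gaussianPDFReal m v
  set I : ℝ → ℝ := Set.indicator A (fun _ => (1:ℝ)) with hIdef
  have hImeas : Measurable I := measurable_const.indicator hA
  have hIbd : ∀ t, |I t| ≤ 1 := by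
    intro t
    by_cases h : t ∈ A
    · simp [hIdef, Set.indicator_of_mem h]
    · simp [hIdef, Set.indicator_of_notMem h]
  set q : ℝ → ℝ → ℝ := fun x r => (2 * Real.sqrt (r - x ^ 2))⁻¹ *
      (ρ (Real.sqrt (r - x ^ 2)) + ρ (-Real.sqrt (r - x ^ 2))) with hqdef
  have hq0 : ∀ x r, 0 ≤ q x r := by
    intro x r
    apply mul_nonneg
    · positivity
    · exact add_nonneg (hρ0 _) (hρ0 _)
  have hwmeas : Measurable (fun z : ℝ × ℝ => Real.sqrt (z.2 - z.1 ^ 2)) :=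
    Real.continuous_sqrt.measurable.comp (measurable_snd.sub (measurable_fst.pow_const 2))
  have hqmeas : Measurable (fun z : ℝ × ℝ => q z.1 z.2) :=
    ((measurable_const.mul hwmeas).inv).mul
      ((hρmeas.comp hwmeas).add (hρmeas.comp hwmeas.neg))
  -- F integrable on the product
  have hFmeas : Measurable (fun z : ℝ × ℝ => g z.1 * I (z.1 ^ 2 + z.2 ^ 2)) :=
    (hg.comp measurable_fst).mul
      (hImeas.comp ((measurable_fst.pow_const 2).add (measurable_snd.pow_const 2)))
  have hFint : Integrable (fun z : ℝ × ℝ => g z.1 * I (z.1 ^ 2 + z.2 ^ 2))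
      ((gaussianReal m v).prod (gaussianReal m v)) := by
    refine ⟨hFmeas.aestronglyMeasurable,
      HasFiniteIntegral.of_bounded (C := C) (ae_of_all _ fun z => ?_)⟩
    calc ‖g z.1 * I (z.1 ^ 2 + z.2 ^ 2)‖ = |g z.1| * |I (z.1 ^ 2 + z.2 ^ 2)| := abs_mul _ _
      _ ≤ C * 1 := mul_le_mul (hC _) (hIbd _) (abs_nonneg _) hC0
      _ = C := mul_one C
  -- step 2 : inner integral computation
  have step2 : ∀ x : ℝ, (∫ y, g x * I (x ^ 2 + y ^ 2) ∂(gaussianReal m v)) =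
      g x * ∫ r in Ioi (x ^ 2), I r * q x r := by
    intro x
    rw [gaussian_integral_rep m v hv]
    rw [show (fun y => ρ y * (g x * I (x ^ 2 + y ^ 2))) =
        fun y => g x * (I (x ^ 2 + y ^ 2) * ρ y) from funext fun y => by ring]
    rw [integral_const_mul]
    congr 1
    have hint : Integrable (fun y => I (x ^ 2 + y ^ 2) * ρ y) :=
      hρint.bdd_mul
        ((hImeas.comp (measurable_const.add (measurable_id.pow_const 2))).aestronglyMeasurable)
        (c := 1) (ae_of_all _ fun y => hIbd _)
    rw [even_split _ hint]
    rw [setIntegral_congr_fun measurableSet_Ioi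
      (show ∀ y ∈ Ioi (0:ℝ), I (x ^ 2 + y ^ 2) * ρ y + I (x ^ 2 + (-y) ^ 2) * ρ (-y)
          = I (x ^ 2 + y ^ 2) * (ρ y + ρ (-y)) from fun y _ => by rw [neg_sq]; ring)]
    rw [cov (x ^ 2) (fun y => I (x ^ 2 + y ^ 2) * (ρ y + ρ (-y)))]
    refine setIntegral_congr_fun measurableSet_Ioi fun r hr => ?_
    have h1 : x ^ 2 + Real.sqrt (r - x ^ 2) ^ 2 = r := by
      rw [Real.sq_sqrt (by linarith [mem_Ioi.1 hr])]; ring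
    rw [h1, hqdef]
    ring
  -- G and its integrability
  set G : ℝ → ℝ → ℝ := fun x r =>
    Set.indicator (Ioi (x ^ 2)) (fun r => g x * (I r * (ρ x * q x r))) r with hGdef
  set K : ℝ × ℝ → ℝ := fun z =>
    Set.indicator {w : ℝ × ℝ | w.1 ^ 2 < w.2} (fun w => ρ w.1 * q w.1 w.2) z with hKdef
  have hSmeas : MeasurableSet {w : ℝ × ℝ | w.1 ^ 2 < w.2} :=
    measurableSet_lt (measurable_fst.pow_const 2) measurable_snd
  have hKmeas : Measurable K := ((hρmeas.comp measurable_fst).mul hqmeas).indicator hSmeas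
  have hK0 : ∀ z, 0 ≤ K z := fun z =>
    Set.indicator_nonneg (fun w _ => mul_nonneg (hρ0 _) (hq0 _ _)) z
  have hKx : ∀ x : ℝ, (fun r => K (x, r)) =
      fun r => Set.indicator (Ioi (x ^ 2)) (fun r => ρ x * q x r) r := by
    intro x
    funext r
    simp [hKdef, Set.indicator_apply, Set.mem_Ioi, Set.mem_setOf_eq]
  have hqintx : ∀ x : ℝ, IntegrableOn (fun r => q x r) (Ioi (x ^ 2)) := fun x => qint m v x
  have hKint_slice : ∀ x : ℝ, Integrable (fun r => K (x, r)) := by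
    intro x
    rw [hKx x]
    rw [integrable_indicator_iff measurableSet_Ioi]
    exact (hqintx x).const_mul (ρ x)
  have hqtot : ∀ x : ℝ, (∫ r in Ioi (x ^ 2), q x r) = 1 := fun x => qtotal m hv x
  have hKsliceval : ∀ x : ℝ, (∫ r, K (x, r)) = ρ x := by
    intro x
    rw [hKx x, integral_indicator measurableSet_Ioi, integral_const_mul, hqtot x, mul_one]
  have hKint : Integrable K ((volume : Measure ℝ).prod volume) := by
    rw [integrable_prod_iff hKmeas.aestronglyMeasurable]
    refine ⟨ae_of_all _ hKint_slice, ?_⟩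
    have heq : (fun x => ∫ r, ‖K (x, r)‖) = ρ := by
      funext x
      rw [← hKsliceval x]
      congr 1
      funext r
      exact Real.norm_of_nonneg (hK0 _)
    rw [heq]
    exact hρint
  have hGK : Function.uncurry G = fun z : ℝ × ℝ => (g z.1 * I z.2) * K z := by
    funext z
    obtain ⟨x, r⟩ := z
    by_cases h : x ^ 2 < r
    · simp only [Function.uncurry, hGdef, hKdef, Set.indicator_of_mem (Set.mem_Ioi.2 h),
        Set.indicator_of_mem (show ((x:ℝ), r) ∈ {w : ℝ × ℝ | w.1 ^ 2 < w.2} from h)]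
      ring
    · simp only [Function.uncurry, hGdef, hKdef,
        Set.indicator_of_notMem (fun hc => h (Set.mem_Ioi.1 hc)),
        Set.indicator_of_notMem (show ((x:ℝ), r) ∉ {w : ℝ × ℝ | w.1 ^ 2 < w.2} from h),
        mul_zero]
  have hGint : Integrable (Function.uncurry G) ((volume : Measure ℝ).prod volume) := by
    rw [hGK]
    refine hKint.bdd_mul
      ((hg.comp measurable_fst).mul (hImeas.comp measurable_snd)).aestronglyMeasurable
      (c := C) (ae_of_all _ fun z => ?_)
    calc ‖g z.1 * I z.2‖ = |g z.1| * |I z.2| := abs_mul _ _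
      _ ≤ C * 1 := mul_le_mul (hC _) (hIbd _) (abs_nonneg _) hC0
      _ = C := mul_one C
  -- main chain
  rw [hμ]
  rw [MeasureTheory.integral_prod _ hFint]
  simp only []
  rw [gaussian_integral_rep m v hv]
  have step3 : (fun x => ρ x * ∫ y, g x * I (x ^ 2 + y ^ 2) ∂(gaussianReal m v)) =
      fun x => ∫ r, G x r := by
    funext x
    rw [step2 x, hGdef]
    rw [integral_indicator measurableSet_Ioi]
    rw [show (fun r => g x * (I r * (ρ x * q x r))) =
        fun r => (ρ x * g x) * (I r * q x r) from funext fun r => by ring]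
    rw [integral_const_mul]
    ring
  rw [step3]
  rw [integral_integral_swap hGint]
  rw [← integral_indicator hA]
  congr 1
  funext r
  by_cases hrA : r ∈ A
  · rw [Set.indicator_of_mem hrA]
    have hr0 : (0:ℝ) < r := hAsub hrA
    have hIr : I r = 1 := Set.indicator_of_mem hrA _
    have hx2iff : ∀ x : ℝ, x ∈ Ioo (-Real.sqrt r) (Real.sqrt r) ↔ x ^ 2 < r := by
      intro x
      rw [Set.mem_Ioo, ← abs_lt, ← sq_abs x, ← Real.lt_sqrt (abs_nonneg x)]
    have hGr : (fun x => G x r) =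
        Set.indicator (Ioo (-Real.sqrt r) (Real.sqrt r)) (fun x => g x * (ρ x * q x r)) := by
      funext x
      by_cases h : x ^ 2 < r
      · rw [hGdef]
        simp only [Set.indicator_of_mem (Set.mem_Ioi.2 h),
          Set.indicator_of_mem ((hx2iff x).2 h), hIr]
        ring
      · rw [hGdef]
        simp only [Set.indicator_of_notMem (fun hc => h (Set.mem_Ioi.1 hc)),
          Set.indicator_of_notMem (fun hc => h ((hx2iff x).1 hc))]
    rw [hGr, integral_indicator measurableSet_Ioo, ← integral_mul_const]
    refine setIntegral_congr_fun measurableSet_Ioo fun x hx => ?_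
    have hx2 : x ^ 2 < r := (hx2iff x).1 hx
    have hkey : ρ x * q x r = f x r * fR r := by
      rw [hf, hfR]
      exact key_identity m σ x r hσ hx2
    linear_combination g x * hkey
  · rw [Set.indicator_of_notMem hrA]
    have hIr : I r = 0 := Set.indicator_of_notMem hrA _
    have : ∀ x : ℝ, G x r = 0 := by
      intro x
      rw [hGdef]
      by_cases h : x ^ 2 < r
      · simp only [Set.indicator_of_mem (Set.mem_Ioi.2 h), hIr]
        ring
      · exact Set.indicator_of_notMem (fun hc => h (Set.mem_Ioi.1 hc)) _
    simp [this]
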